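/- Let $3 \leq k \leq n/2$ and let $I_1, \dots, I_s$ be $k$-element subsets of $\mathbb{Z}/n\mathbb{Z}$. For $i \in \mathbb{Z}/n\mathbb{Z}$ set $r_i = |\{j : i \in I_j\}|$. Let $\sigma$ be the $s \times s$ matrix $\sigma = \sum_{i=1}^{s-1} E_{i,i+1} + t E_{s,1}$ over $\mathbb{C}[t]$, and define $x_i = \sigma^{s - r_i}$, $y_i = \sigma^{r_i}$. Then for every $i \in \mathbb{Z}/n\mathbb{Z}$: (a) $x_i y_i = y_{i+1} x_{i+1} = t \cdot \mathrm{Id}_s$, and (b) $x_{i+k-1} x_{i+k-2} \cdots x_{i+1} x_i = y_{i+k} y_{i+k+1} \cdots y_{i-1}$, i.e., the composition of $k$ consecutive $x$-maps equals the composition of $n-k$ consecutive $y$-maps (both products taken cyclically). -/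
import Mathlib

open Polynomial

private lemma sigma_pow_entry {s : ℕ} (σ : Matrix (Fin s) (Fin s) (Polynomial ℂ))
    (hσ : ∀ a b : Fin s, σ a b =
      if (b : ℕ) = (a : ℕ) + 1 then 1
      else if (a : ℕ) = s - 1 ∧ (b : ℕ) = 0 then (X : Polynomial ℂ) else 0) :
    ∀ m, m ≤ s → ∀ a b : Fin s, (σ ^ m) a b =
      if (b : ℕ) = (a : ℕ) + m then 1
      else if (b : ℕ) + s = (a : ℕ) + m then (X : Polynomial ℂ) else 0 := by
  intro m
  induction m with
  | zero =>
    intro _ a b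
    have hb := b.is_lt
    have h1 : ¬((b : ℕ) + s = (a : ℕ) + 0) := by omega
    simp only [pow_zero, Matrix.one_apply, Fin.ext_iff, Nat.add_zero, if_neg (by omega : ¬((b:ℕ) + s = (a:ℕ)))]
    by_cases h : (a : ℕ) = (b : ℕ)
    · rw [if_pos h, if_pos h.symm]
    · rw [if_neg h, if_neg (fun hh => h hh.symm)]
  | succ m ih =>
    intro hm a b
    have hms : m ≤ s := Nat.le_of_succ_le hm
    have ih' := ih hms
    have ha := a.is_lt
    have hb := b.is_lt
    rw [pow_succ, Matrix.mul_apply]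
    by_cases h : (a : ℕ) + m < s
    · -- single nonzero column c0 = a + m, entry 1
      set c0 : Fin s := ⟨(a : ℕ) + m, h⟩ with hc0
      rw [Finset.sum_eq_single c0]
      · have h1 : (σ ^ m) a c0 = 1 := by
          rw [ih' a c0]; simp [hc0]
        rw [h1, one_mul, hσ]
        simp only [hc0]
        by_cases hb1 : (b : ℕ) = (a : ℕ) + m + 1
        · rw [if_pos hb1, if_pos (by omega : (b:ℕ) = (a:ℕ) + (m+1))]
        · rw [if_neg hb1, if_neg (by omega : ¬((b:ℕ) = (a:ℕ) + (m+1)))]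
          by_cases hb2 : (b : ℕ) + s = (a : ℕ) + (m + 1)
          · rw [if_pos (by omega : ((a:ℕ)+m : ℕ) = s - 1 ∧ (b:ℕ) = 0), if_pos hb2]
          · rw [if_neg (by omega : ¬(((a:ℕ)+m : ℕ) = s - 1 ∧ (b:ℕ) = 0)), if_neg hb2]
      · intro c _ hc
        have hcne : (c : ℕ) ≠ (a : ℕ) + m := fun hh => hc (Fin.ext hh)
        have hc2 : ¬((c : ℕ) + s = (a : ℕ) + m) := by have := c.is_lt; omega
        rw [ih' a c, if_neg hcne, if_neg hc2, zero_mul]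
      · intro hcu; exact absurd (Finset.mem_univ c0) hcu
    · -- single nonzero column c0 = a + m - s, entry X
      push_neg at h
      have hc0lt : (a : ℕ) + m - s < s - 1 := by omega
      set c0 : Fin s := ⟨(a : ℕ) + m - s, by omega⟩ with hc0
      rw [Finset.sum_eq_single c0]
      · have h1 : (σ ^ m) a c0 = X := by
          rw [ih' a c0, if_neg (by simp [hc0]; omega), if_pos (by simp [hc0]; omega)]
        rw [h1, hσ]
        simp only [hc0]
        rw [if_neg (by omega : ¬((b:ℕ) = (a:ℕ) + (m+1)))]
        by_cases hb2 : (b : ℕ) = (a : ℕ) + m - s + 1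
        · rw [if_pos hb2, if_pos (by omega : (b:ℕ) + s = (a:ℕ) + (m+1)), mul_one]
        · rw [if_neg hb2, if_neg (by omega : ¬(((a:ℕ)+m-s : ℕ) = s - 1 ∧ (b:ℕ) = 0)),
            if_neg (by omega : ¬((b:ℕ) + s = (a:ℕ) + (m+1))), mul_zero]
      · intro c _ hc
        have hcne : (c : ℕ) ≠ (a : ℕ) + m - s := fun hh => hc (Fin.ext hh)
        have hc1 : ¬((c : ℕ) = (a : ℕ) + m) := by have := c.is_lt; omega
        have hc2 : ¬((c : ℕ) + s = (a : ℕ) + m) := by have := c.is_lt; omega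
        rw [ih' a c, if_neg hc1, if_neg hc2, zero_mul]
      · intro hcu; exact absurd (Finset.mem_univ c0) hcu

private lemma sigma_pow_s {s : ℕ} (hs : 1 ≤ s) (σ : Matrix (Fin s) (Fin s) (Polynomial ℂ))
    (hσ : ∀ a b : Fin s, σ a b =
      if (b : ℕ) = (a : ℕ) + 1 then 1
      else if (a : ℕ) = s - 1 ∧ (b : ℕ) = 0 then (X : Polynomial ℂ) else 0) :
    σ ^ s = (X : Polynomial ℂ) • (1 : Matrix (Fin s) (Fin s) (Polynomial ℂ)) := by
  ext a b
  have ha := a.is_lt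
  have hb := b.is_lt
  rw [sigma_pow_entry σ hσ s le_rfl, Matrix.smul_apply, Matrix.one_apply,
    if_neg (by omega : ¬((b:ℕ) = (a:ℕ) + s))]
  by_cases h : a = b
  · rw [if_pos (by rw [h] : (b:ℕ) + s = (a:ℕ) + s), if_pos h, smul_eq_mul, mul_one]
  · rw [if_neg (fun hh : (b:ℕ) + s = (a:ℕ) + s => h (Fin.ext (by omega : (a:ℕ) = (b:ℕ)))),
      if_neg h, smul_eq_mul, mul_zero]

private lemma list_prod_pow {α : Type*} [Monoid α] (M : α) (f : ℕ → ℕ) :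
    ∀ l : List ℕ, (l.map (fun m => M ^ f m)).prod = M ^ ((l.map f).sum)
  | [] => by simp
  | a :: l => by
    simp only [List.map_cons, List.prod_cons, List.sum_cons, list_prod_pow M f l, pow_add]

private lemma zmod_sum_range {n : ℕ} [NeZero n] (f : ZMod n → ℕ) :
    ∑ m ∈ Finset.range n, f (m : ZMod n) = ∑ j : ZMod n, f j := by
  refine Finset.sum_nbij' (fun m => (m : ZMod n)) (fun j => j.val) ?_ ?_ ?_ ?_ ?_ <;>
    intros <;>
    simp_all [ZMod.val_lt, ZMod.val_natCast_of_lt, Finset.mem_range, Nat.mod_eq_of_lt]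

open Polynomial in
/-- The maps x_i = σ^{s-r_i}, y_i = σ^{r_i} of the construction L(I_1,…,I_s) satisfy the
defining relations of B_{k,n}: x_i y_i = y_{i+1} x_{i+1} = t·Id and x^k = y^{n-k}. -/
theorem stmt_1 (n k s : ℕ) (hs : 1 ≤ s) (hk : 3 ≤ k) (hn : 2 * k ≤ n)
    (I : Fin s → Finset (ZMod n)) (hI : ∀ j, (I j).card = k)
    (r : ZMod n → ℕ)
    (hr : ∀ i, r i = (Finset.univ.filter (fun j : Fin s => i ∈ I j)).card)
    (σ : Matrix (Fin s) (Fin s) (Polynomial ℂ))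
    (hσ : ∀ a b : Fin s, σ a b =
      if (b : ℕ) = (a : ℕ) + 1 then 1
      else if (a : ℕ) = s - 1 ∧ (b : ℕ) = 0 then (X : Polynomial ℂ) else 0)
    (x y : ZMod n → Matrix (Fin s) (Fin s) (Polynomial ℂ))
    (hx : ∀ i, x i = σ ^ (s - r i)) (hy : ∀ i, y i = σ ^ (r i)) :
    (∀ i : ZMod n,
      x i * y i = (X : Polynomial ℂ) • (1 : Matrix (Fin s) (Fin s) (Polynomial ℂ)) ∧
      y (i + 1) * x (i + 1) =
        (X : Polynomial ℂ) • (1 : Matrix (Fin s) (Fin s) (Polynomial ℂ)))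
    ∧ (∀ i : ZMod n,
      ((List.range k).map (fun m => x (i + ((k - 1 - m : ℕ) : ZMod n)))).prod
        = ((List.range (n - k)).map (fun m => y (i + ((k + m : ℕ) : ZMod n)))).prod) := by
  haveI : NeZero n := ⟨by omega⟩
  have hpows := sigma_pow_s hs σ hσ
  have hrle : ∀ i, r i ≤ s := by
    intro i
    rw [hr]
    exact (Finset.card_filter_le _ _).trans (by simp)
  have hsum : ∑ j : ZMod n, r j = s * k := by
    calc ∑ j : ZMod n, r j
        = ∑ j : ZMod n, ∑ t : Fin s, (if j ∈ I t then 1 else 0) := by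
          refine Finset.sum_congr rfl fun j _ => ?_
          rw [hr, Finset.card_filter]
      _ = ∑ t : Fin s, ∑ j : ZMod n, (if j ∈ I t then 1 else 0) := Finset.sum_comm
      _ = ∑ t : Fin s, (I t).card := by
          refine Finset.sum_congr rfl fun t _ => ?_
          rw [← Finset.card_filter]
          congr 1
          ext j
          simp
      _ = s * k := by simp [hI, Finset.sum_const, mul_comm]
  constructor
  · intro i
    have key : ∀ j : ZMod n, σ ^ (s - r j) * σ ^ (r j) = (X : Polynomial ℂ) • 1 := by
      intro j
      rw [← pow_add, Nat.sub_add_cancel (hrle j), hpows]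
    have key2 : ∀ j : ZMod n, σ ^ (r j) * σ ^ (s - r j) = (X : Polynomial ℂ) • 1 := by
      intro j
      rw [← pow_add, Nat.add_sub_cancel' (hrle j), hpows]
    exact ⟨by rw [hx, hy]; exact key i, by rw [hx, hy]; exact key2 (i + 1)⟩
  · intro i
    have hxl : ((List.range k).map (fun m => x (i + ((k - 1 - m : ℕ) : ZMod n)))).prod
        = σ ^ (((List.range k).map (fun m => s - r (i + ((k - 1 - m : ℕ) : ZMod n)))).sum) := by
      rw [← list_prod_pow σ (fun m => s - r (i + ((k - 1 - m : ℕ) : ZMod n))) (List.range k)]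
      simp only [hx]
    have hyl : ((List.range (n - k)).map (fun m => y (i + ((k + m : ℕ) : ZMod n)))).prod
        = σ ^ (((List.range (n - k)).map (fun m => r (i + ((k + m : ℕ) : ZMod n)))).sum) := by
      rw [← list_prod_pow σ (fun m => r (i + ((k + m : ℕ) : ZMod n))) (List.range (n - k))]
      simp only [hy]
    rw [hxl, hyl]
    congr 1
    -- reduce to Finset sums
    show ∑ m ∈ Finset.range k, (s - r (i + ((k - 1 - m : ℕ) : ZMod n)))
        = ∑ m ∈ Finset.range (n - k), r (i + ((k + m : ℕ) : ZMod n))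
    have hA : ∑ m ∈ Finset.range k, (s - r (i + ((k - 1 - m : ℕ) : ZMod n)))
        = s * k - ∑ m ∈ Finset.range k, r (i + ((k - 1 - m : ℕ) : ZMod n)) := by
      rw [eq_tsub_iff_add_eq_of_le, ← Finset.sum_add_distrib]
      · rw [Finset.sum_congr rfl fun m _ => Nat.sub_add_cancel (hrle _)]
        simp [mul_comm]
      · calc ∑ m ∈ Finset.range k, r (i + ((k - 1 - m : ℕ) : ZMod n))
            ≤ ∑ _m ∈ Finset.range k, s := Finset.sum_le_sum fun m _ => hrle _
          _ = s * k := by simp [mul_comm]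
    have hrefl : ∑ m ∈ Finset.range k, r (i + ((k - 1 - m : ℕ) : ZMod n))
        = ∑ m ∈ Finset.range k, r (i + (m : ZMod n)) :=
      Finset.sum_range_reflect (fun m => r (i + (m : ZMod n))) k
    have hsplit : (∑ m ∈ Finset.range k, r (i + (m : ZMod n)))
        + ∑ m ∈ Finset.range (n - k), r (i + ((k + m : ℕ) : ZMod n)) = s * k := by
      have := Finset.sum_range_add (fun m => r (i + (m : ZMod n))) k (n - k)
      rw [Nat.add_sub_cancel' (by omega : k ≤ n)] at this
      rw [← this]
      rw [zmod_sum_range (fun j => r (i + j))]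
      rw [← hsum]
      exact Fintype.sum_equiv (Equiv.addLeft i) _ _ (fun j => rfl)
    have hB : ∑ m ∈ Finset.range k, r (i + ((k - 1 - m : ℕ) : ZMod n)) ≤ s * k := by
      omega
    omega
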